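/- Local exact controllability of perturbed linear ODEs: let A ∈ R^{n×n}, B ∈ R^{n×m} satisfy the Kalman rank condition, and let f ∈ C^1(R^n; R^n) with f(y) = O(|y|^{1+δ}) as y → 0 for some δ > 0. Then the system y' = Ay + f(y) + Bu is locally exactly controllable at 0 in time T: there exists r > 0 such that for all y0, y1 ∈ R^n with |y0|, |y1| < r, there exists a control u ∈ L^∞(0,T;R^m) whose corresponding solution satisfies y(0) = y0 and y(T) = y1. -/

import Mathlib

open MeasureTheory NormedSpace intervalIntegral

set_option maxHeartbeats 1000000
set_option synthInstance.maxHeartbeats 200000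

/-- The Kalman controllability matrix `[B, AB, A²B, …, Aⁿ⁻¹B]`. -/
noncomputable def kalmanMatrix {n m : ℕ} (A : Matrix (Fin n) (Fin n) ℝ)
    (B : Matrix (Fin n) (Fin m) ℝ) : Matrix (Fin n) (Fin n × Fin m) ℝ :=
  Matrix.of fun i p => (A ^ (p.1 : ℕ) * B) i p.2

noncomputable def matCLM {k l : ℕ} (M : Matrix (Fin k) (Fin l) ℝ) :
    (Fin l → ℝ) →L[ℝ] (Fin k → ℝ) :=
  LinearMap.toContinuousLinearMap M.mulVecLin

@[simp] lemma matCLM_apply {k l : ℕ} (M : Matrix (Fin k) (Fin l) ℝ) (x : Fin l → ℝ) :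
    matCLM M x = M.mulVec x := rfl

lemma matCLM_pow_apply {k : ℕ} (M : Matrix (Fin k) (Fin k) ℝ) (p : ℕ) (x : Fin k → ℝ) :
    (matCLM M ^ p) x = (M ^ p).mulVec x := by
  induction p with
  | zero => simp [Matrix.one_mulVec]
  | succ p ih =>
    rw [pow_succ', pow_succ']
    simp only [ContinuousLinearMap.mul_apply, ih, matCLM_apply, Matrix.mulVec_mulVec]

/-- `exp(t A)` as a continuous linear map. -/
noncomputable def expA {n : ℕ} (A : Matrix (Fin n) (Fin n) ℝ) (t : ℝ) :
    (Fin n → ℝ) →L[ℝ] (Fin n → ℝ) :=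
  NormedSpace.exp (t • matCLM A)

lemma continuous_expA {n : ℕ} (A : Matrix (Fin n) (Fin n) ℝ) : Continuous (expA A) :=
  (continuous_iff_continuousAt.2 fun x => (exp_analytic (𝕂 := ℝ) x).continuousAt).comp
    (continuous_id.smul continuous_const)

lemma expA_add {n : ℕ} (A : Matrix (Fin n) (Fin n) ℝ) (s t : ℝ) :
    expA A (s + t) = expA A s * expA A t := by
  rw [expA, expA, expA, add_smul]
  exact exp_add_of_commute_of_mem_ball (𝕂 := ℝ) (((Commute.refl (matCLM A)).smul_left s).smul_right t)
    ((expSeries_radius_eq_top ℝ ((Fin n → ℝ) →L[ℝ] (Fin n → ℝ))).symm ▸ edist_lt_top _ _)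
    ((expSeries_radius_eq_top ℝ ((Fin n → ℝ) →L[ℝ] (Fin n → ℝ))).symm ▸ edist_lt_top _ _)

lemma expA_neg_cancel {n : ℕ} (A : Matrix (Fin n) (Fin n) ℝ) (t : ℝ) (x : Fin n → ℝ) :
    expA A t (expA A (-t) x) = x := by
  have : expA A t * expA A (-t) = 1 := by
    rw [← expA_add]; simp [expA, exp_zero]
  calc expA A t (expA A (-t) x) = (expA A t * expA A (-t)) x := rfl
    _ = x := by rw [this]; rfl

lemma hasDerivAt_expA {n : ℕ} (A : Matrix (Fin n) (Fin n) ℝ) (t : ℝ) :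
    HasDerivAt (expA A) (expA A t * matCLM A) t :=
  hasDerivAt_exp_smul_const (matCLM A) t

lemma controllable_integrand_continuous {n m : ℕ} (A : Matrix (Fin n) (Fin n) ℝ)
    (B : Matrix (Fin n) (Fin m) ℝ) (T : ℝ) {u : ℝ → Fin m → ℝ} (hu : Continuous u) :
    Continuous fun s => expA A (T - s) (matCLM B (u s)) :=
  ((continuous_expA A).comp (continuous_const.sub continuous_id)).clm_apply
    ((matCLM B).continuous.comp hu)

lemma controllable {n m : ℕ} (A : Matrix (Fin n) (Fin n) ℝ) (B : Matrix (Fin n) (Fin m) ℝ)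
    (T : ℝ) (hT : 0 < T) (hK : (kalmanMatrix A B).rank = n) (c : Fin n → ℝ) :
    ∃ u : ℝ → Fin m → ℝ, Continuous u ∧
      (∫ s in (0:ℝ)..T, expA A (T - s) (matCLM B (u s))) = c := by
  classical
  set Λ : (ℝ → Fin m → ℝ) → (Fin n → ℝ) :=
    fun u => ∫ s in (0:ℝ)..T, expA A (T - s) (matCLM B (u s)) with hΛ
  have hint : ∀ {u : ℝ → Fin m → ℝ}, Continuous u →
      IntervalIntegrable (fun s => expA A (T - s) (matCLM B (u s))) volume 0 T :=
    fun hu => (controllable_integrand_continuous A B T hu).intervalIntegrable 0 T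
  set S : Submodule ℝ (Fin n → ℝ) :=
    { carrier := {x | ∃ u : ℝ → Fin m → ℝ, Continuous u ∧ Λ u = x}
      add_mem' := by
        rintro x y ⟨u, hu, rfl⟩ ⟨v, hv, rfl⟩
        refine ⟨u + v, hu.add hv, ?_⟩
        simp only [hΛ, Pi.add_apply, map_add]
        rw [intervalIntegral.integral_add (hint hu) (hint hv)]
      zero_mem' := ⟨0, continuous_const, by simp [hΛ]⟩
      smul_mem' := by
        rintro r x ⟨u, hu, rfl⟩
        refine ⟨r • u, hu.const_smul r, ?_⟩
        simp only [hΛ, Pi.smul_apply, _root_.map_smul]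
        rw [intervalIntegral.integral_smul] } with hS
  suffices htop : S = ⊤ by
    have : c ∈ S := htop ▸ Submodule.mem_top
    exact this
  by_contra hne
  obtain ⟨φ, hφ0, hφmap⟩ :=
    S.exists_dual_map_eq_bot_of_lt_top (lt_top_iff_ne_top.2 hne) inferInstance
  have hφS : ∀ x ∈ S, φ x = 0 := by
    intro x hx
    have : φ x ∈ S.map φ := ⟨x, hx, rfl⟩
    rw [hφmap] at this
    simpa using this
  have hφcont : Continuous φ := LinearMap.continuous_of_finiteDimensional φ
  -- step 1 : φ (expA A t (B eⱼ)) = 0 for t ∈ Ioo 0 T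
  have step1 : ∀ j : Fin m, ∀ t ∈ Set.Ioo (0:ℝ) T,
      φ (expA A t (matCLM B (Pi.single j 1))) = 0 := by
    intro j t ht
    set g : ℝ → ℝ := fun s => φ (expA A (T - s) (matCLM B (Pi.single j 1))) with hg
    have hgc : Continuous g :=
      hφcont.comp (((continuous_expA A).comp (continuous_const.sub continuous_id)).clm_apply
        continuous_const)
    have key : (∫ s in (0:ℝ)..T, g s * g s) = 0 := by
      have hu : Continuous fun s => g s • (Pi.single j 1 : Fin m → ℝ) :=
        hgc.smul continuous_const
      have hmem : Λ (fun s => g s • (Pi.single j 1 : Fin m → ℝ)) ∈ S := ⟨_, hu, rfl⟩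
      have h0 := hφS _ hmem
      have hcomm := (LinearMap.toContinuousLinearMap φ).intervalIntegral_comp_comm (hint hu)
      have heq : (∫ s in (0:ℝ)..T,
          (LinearMap.toContinuousLinearMap φ) (expA A (T - s)
            (matCLM B (g s • (Pi.single j 1 : Fin m → ℝ))))) = ∫ s in (0:ℝ)..T, g s * g s := by
        refine intervalIntegral.integral_congr fun s _ => ?_
        simp only [_root_.map_smul, smul_eq_mul, LinearMap.coe_toContinuousLinearMap']
        rfl
      rw [heq] at hcomm
      rw [hcomm]
      exact h0
    -- g vanishes on Ioo 0 T
    have hg0 : ∀ s ∈ Set.Ioo (0:ℝ) T, g s = 0 := by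
      intro s₀ hs₀
      by_contra hgs
      have hopen : IsOpen ({x | g x ≠ 0} ∩ Set.Ioo 0 T) :=
        (isOpen_ne.preimage hgc).inter isOpen_Ioo
      obtain ⟨ε, hε, hball⟩ := Metric.isOpen_iff.1 hopen s₀ ⟨hgs, hs₀⟩
      set a := s₀ - ε / 2 with ha
      set b := s₀ + ε / 2 with hb
      have hab : a < b := by rw [ha, hb]; linarith
      have hsub : ∀ x ∈ Set.Icc a b, x ∈ {x | g x ≠ 0} ∩ Set.Ioo 0 T := by
        intro x hx
        obtain ⟨hx1, hx2⟩ := hx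
        rw [ha] at hx1; rw [hb] at hx2
        refine hball ?_
        rw [Metric.mem_ball, Real.dist_eq, abs_sub_lt_iff]
        constructor <;> linarith
      have ha0 : 0 < a := (hsub a ⟨le_refl a, hab.le⟩).2.1
      have hbT : b < T := (hsub b ⟨hab.le, le_refl b⟩).2.2
      have hgg : Continuous fun s => g s * g s := hgc.mul hgc
      have hmidpos : 0 < ∫ s in a..b, g s * g s := by
        refine intervalIntegral_pos_of_pos_on (hgg.intervalIntegrable a b) ?_ hab
        intro x hx
        exact mul_self_pos.2 (hsub x ⟨hx.1.le, hx.2.le⟩).1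
      have h1 : 0 ≤ ∫ s in (0:ℝ)..a, g s * g s :=
        intervalIntegral.integral_nonneg ha0.le fun u _ => mul_self_nonneg _
      have h2 : 0 ≤ ∫ s in b..T, g s * g s :=
        intervalIntegral.integral_nonneg hbT.le fun u _ => mul_self_nonneg _
      have hsplit1 : (∫ s in a..b, g s * g s) + ∫ s in b..T, g s * g s
          = ∫ s in a..T, g s * g s :=
        intervalIntegral.integral_add_adjacent_intervals (hgg.intervalIntegrable a b)
          (hgg.intervalIntegrable b T)
      have hsplit2 : (∫ s in (0:ℝ)..a, g s * g s) + ∫ s in a..T, g s * g s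
          = ∫ s in (0:ℝ)..T, g s * g s :=
        intervalIntegral.integral_add_adjacent_intervals (hgg.intervalIntegrable 0 a)
          (hgg.intervalIntegrable a T)
      rw [key] at hsplit2
      linarith
    have hTt : T - t ∈ Set.Ioo (0:ℝ) T := ⟨by linarith [ht.2], by linarith [ht.1]⟩
    have := hg0 (T - t) hTt
    rw [hg] at this
    simpa [sub_sub_cancel] using this
  -- step 2 : derivatives, φ (expA A t (Aᵏ B eⱼ)) = 0 on Ioo 0 T
  have step2 : ∀ k : ℕ, ∀ t ∈ Set.Ioo (0:ℝ) T, ∀ j : Fin m,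
      φ (expA A t ((matCLM A ^ k) (matCLM B (Pi.single j 1)))) = 0 := by
    intro k
    induction k with
    | zero => intro t ht j; simpa using step1 j t ht
    | succ k ih =>
      intro t ht j
      set x := (matCLM A ^ k) (matCLM B (Pi.single j 1)) with hx
      have hderiv : HasDerivAt (fun u : ℝ => φ (expA A u x))
          (φ (expA A t (matCLM A x))) t := by
        have h1 := (hasDerivAt_expA A t).clm_apply (hasDerivAt_const t x)
        have h2 := ((LinearMap.toContinuousLinearMap φ).hasFDerivAt).comp_hasDerivAt t h1
        simp only [ContinuousLinearMap.mul_apply, smul_zero, add_zero,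
          LinearMap.coe_toContinuousLinearMap', map_add, map_zero] at h2
        exact h2
      have heq : (fun u : ℝ => φ (expA A u x)) =ᶠ[nhds t] fun _ => (0:ℝ) := by
        filter_upwards [isOpen_Ioo.mem_nhds ht] with u hu using ih u hu j
      have h3 : HasDerivAt (fun _ : ℝ => (0:ℝ)) (φ (expA A t (matCLM A x))) t :=
        hderiv.congr_of_eventuallyEq heq.symm
      have h4 := h3.unique (hasDerivAt_const t 0)
      rw [hx] at h4
      rw [pow_succ']
      simpa [ContinuousLinearMap.mul_apply] using h4
  -- step 3 : contradiction via the Kalman rank condition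
  have ht₀ : (T/2 : ℝ) ∈ Set.Ioo (0:ℝ) T := ⟨by linarith, by linarith⟩
  have hrange : LinearMap.range (kalmanMatrix A B).mulVecLin = ⊤ := by
    apply Submodule.eq_top_of_finrank_eq
    rw [Module.finrank_fin_fun]
    exact hK
  have hψcols : ∀ p : Fin n × Fin m,
      φ (expA A (T/2) ((kalmanMatrix A B).mulVecLin (Pi.single p 1))) = 0 := by
    intro p
    have hcol : (kalmanMatrix A B).mulVecLin (Pi.single p 1)
        = (matCLM A ^ (p.1 : ℕ)) (matCLM B (Pi.single p.2 1)) := by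
      rw [matCLM_pow_apply, matCLM_apply, Matrix.mulVec_mulVec]
      simp only [Matrix.mulVecLin_apply]
      rw [Matrix.mulVec_single, Matrix.mulVec_single]
      funext i
      simp [kalmanMatrix]
    rw [hcol]
    exact step2 p.1 (T/2) ht₀ p.2
  have hφzero : φ = 0 := by
    apply LinearMap.ext
    intro v
    obtain ⟨w, hw⟩ := (LinearMap.range_eq_top.1 hrange) (expA A (-(T/2)) v)
    have hv : expA A (T/2) ((kalmanMatrix A B).mulVecLin w) = v := by
      rw [hw]; exact expA_neg_cancel A (T/2) v
    have hwsum : (kalmanMatrix A B).mulVecLin w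
        = ∑ p : Fin n × Fin m, w p • (kalmanMatrix A B).mulVecLin (Pi.single p 1) := by
      conv_lhs => rw [pi_eq_sum_univ w]
      rw [map_sum]
      refine Finset.sum_congr rfl fun p _ => ?_
      rw [_root_.map_smul]
      congr 2
      funext j
      simp [Pi.single_apply, eq_comm]
    have : φ v = ∑ p : Fin n × Fin m,
        w p • φ (expA A (T/2) ((kalmanMatrix A B).mulVecLin (Pi.single p 1))) := by
      rw [← hv, hwsum, map_sum, map_sum]
      congr 1
      funext p
      rw [_root_.map_smul, _root_.map_smul]
    rw [this]
    refine Finset.sum_eq_zero fun p _ => ?_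
    rw [hψcols, smul_zero]
  exact hφ0 hφzero
theorem local_exact_controllability_nonlinear {n m : ℕ}
    (A : Matrix (Fin n) (Fin n) ℝ) (B : Matrix (Fin n) (Fin m) ℝ) (T : ℝ) (hT : 0 < T)
    (hKalman : (kalmanMatrix A B).rank = n)
    (f : (Fin n → ℝ) → (Fin n → ℝ)) (hf : ContDiff ℝ 1 f)
    (hf0 : f 0 = 0) (hDf0 : fderiv ℝ f 0 = 0)
    (δ C ρ : ℝ) (hδ : 0 < δ) (hC : 0 < C) (hρ : 0 < ρ)
    (hgrowth : ∀ y : Fin n → ℝ, ‖y‖ ≤ ρ → ‖f y‖ ≤ C * ‖y‖ ^ (1 + δ)) :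
    ∃ r > 0, ∀ y0 y1 : Fin n → ℝ, ‖y0‖ < r → ‖y1‖ < r →
      ∃ (u : ℝ → Fin m → ℝ) (y : ℝ → Fin n → ℝ),
        MemLp u ⊤ (volume.restrict (Set.Ioc 0 T)) ∧
        ContinuousOn y (Set.Icc 0 T) ∧
        (∀ t ∈ Set.Icc (0:ℝ) T,
          y t = y0 + ∫ s in (0:ℝ)..t,
            (A.mulVec (y s) + f (y s) + B.mulVec (u s))) ∧
        y T = y1 := by
  classical
  -- bound on the matrix exponential
  obtain ⟨M, hM1, hM⟩ : ∃ M : ℝ, 1 ≤ M ∧ ∀ t ∈ Set.Icc (-T) T, ‖expA A t‖ ≤ M := by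
    obtain ⟨M₀, hM₀⟩ := (isCompact_Icc (a := -T) (b := T)).exists_bound_of_continuousOn
      (continuous_expA A).continuousOn
    exact ⟨max M₀ 1, le_max_right _ _, fun t ht => (hM₀ t ht).trans (le_max_left _ _)⟩
  have hM0 : (0:ℝ) ≤ M := zero_le_one.trans hM1
  -- basic controls realizing the standard basis vectors
  choose uB huBc huBval using fun i : Fin n => controllable A B T hT hKalman (Pi.single i 1)
  choose Kb hKb using fun i : Fin n =>
    isCompact_Icc.exists_bound_of_continuousOn (huBc i).continuousOn
  set κ : ℝ := ∑ i : Fin n, max (Kb i) 0 with hκdef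
  have hκ0 : (0:ℝ) ≤ κ := Finset.sum_nonneg fun i _ => le_max_right _ _
  set ucf : (Fin n → ℝ) → ℝ → Fin m → ℝ := fun c s => ∑ i : Fin n, c i • uB i s with hucfdef
  have hucfc : ∀ c, Continuous (ucf c) := fun c =>
    continuous_finset_sum _ fun i _ => by have := huBc i; fun_prop
  have hucfb : ∀ c, ∀ s ∈ Set.Icc (0:ℝ) T, ‖ucf c s‖ ≤ κ * ‖c‖ := by
    intro c s hs
    calc ‖ucf c s‖ ≤ ∑ i : Fin n, ‖c i • uB i s‖ := norm_sum_le _ _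
      _ ≤ ∑ i : Fin n, ‖c‖ * max (Kb i) 0 := by
          refine Finset.sum_le_sum fun i _ => ?_
          rw [norm_smul]
          exact mul_le_mul (norm_le_pi_norm c i) ((hKb i s hs).trans (le_max_left _ _))
            (norm_nonneg _) (norm_nonneg _)
      _ = κ * ‖c‖ := by rw [← Finset.mul_sum, mul_comm]
  have hucfsub : ∀ c c' s, ucf (c - c') s = ucf c s - ucf c' s := by
    intro c c' s
    simp only [hucfdef, Pi.sub_apply, sub_smul, Finset.sum_sub_distrib]
  have hucfval : ∀ c, (∫ s in (0:ℝ)..T, expA A (T - s) (matCLM B (ucf c s))) = c := by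
    intro c
    have hpt : ∀ s : ℝ, expA A (T - s) (matCLM B (ucf c s))
        = ∑ i : Fin n, c i • expA A (T - s) (matCLM B (uB i s)) := by
      intro s
      simp only [hucfdef, map_sum, _root_.map_smul]
    rw [intervalIntegral.integral_congr fun s _ => hpt s]
    rw [intervalIntegral.integral_finset_sum (f := fun i s => c i • expA A (T - s) (matCLM B (uB i s))) fun i _ =>
      ((controllable_integrand_continuous A B T (huBc i)).const_smul (c i)).intervalIntegrable 0 T]
    have h5 : ∀ i : Fin n, (∫ s in (0:ℝ)..T, c i • expA A (T - s) (matCLM B (uB i s)))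
        = c i • (Pi.single i 1 : Fin n → ℝ) := by
      intro i
      rw [intervalIntegral.integral_smul, huBval i]
    rw [Finset.sum_congr rfl fun i _ => h5 i]
    calc (∑ i : Fin n, c i • (Pi.single i 1 : Fin n → ℝ))
        = ∑ i : Fin n, (Pi.single i (c i) : Fin n → ℝ) := by
          refine Finset.sum_congr rfl fun i _ => ?_
          rw [← Pi.single_smul, smul_eq_mul, mul_one]
      _ = c := Finset.univ_sum_single c
  set NB : ℝ := ‖matCLM B‖ with hNBdef
  have hNB : (0:ℝ) ≤ NB := norm_nonneg _
  -- nonnegativity facts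
  have hP1 : (0:ℝ) ≤ NB * κ * T * M :=
    mul_nonneg (mul_nonneg (mul_nonneg hNB hκ0) hT.le) hM0
  have hQe0 : (0:ℝ) ≤ M * T * M * (1 + NB * κ * T * M) :=
    mul_nonneg (mul_nonneg (mul_nonneg hM0 hT.le) hM0) (by linarith)
  set ε : ℝ := 1 / (2 * (M * T * M * (1 + NB * κ * T * M) + 1)) with hεdef
  have hε0 : (0:ℝ) < ε := by
    rw [hεdef]
    exact div_pos one_pos (by linarith)
  have hεQ : ε * (M * T * M * (1 + NB * κ * T * M)) ≤ 1 / 2 := by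
    have h1 : ε * (M * T * M * (1 + NB * κ * T * M) + 1) = 1 / 2 := by
      rw [hεdef]
      field_simp
    nlinarith [hε0.le]
  -- radius on which `f` has small Lipschitz constant
  obtain ⟨R₀, hR₀, hfd⟩ : ∃ R₀ > 0, ∀ x : Fin n → ℝ, ‖x‖ ≤ R₀ → ‖fderiv ℝ f x‖ ≤ ε := by
    have hcf : Continuous (fderiv ℝ f) := hf.continuous_fderiv one_ne_zero
    have h0 := (Metric.continuousAt_iff).1 (hcf.continuousAt (x := 0))
    obtain ⟨δ', hδ', h⟩ := h0 ε hε0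
    refine ⟨δ' / 2, by linarith, fun x hx => ?_⟩
    have hd : dist x 0 < δ' := by
      rw [dist_zero_right]; linarith
    have := h hd
    rw [hDf0, dist_zero_right] at this
    exact this.le
  have hdiff : ∀ x ∈ Metric.closedBall (0 : Fin n → ℝ) R₀, DifferentiableAt ℝ f x :=
    fun x _ => (hf.differentiable one_ne_zero).differentiableAt
  have hlip : ∀ x y : Fin n → ℝ, ‖x‖ ≤ R₀ → ‖y‖ ≤ R₀ → ‖f x - f y‖ ≤ ε * ‖x - y‖ := by
    intro x y hx hy
    exact (convex_closedBall (0 : Fin n → ℝ) R₀).norm_image_sub_le_of_norm_fderiv_le hdiff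
      (fun z hz => hfd z (mem_closedBall_zero_iff.1 hz))
      (mem_closedBall_zero_iff.2 hy) (mem_closedBall_zero_iff.2 hx)
  have hsmall : ∀ x : Fin n → ℝ, ‖x‖ ≤ R₀ → ‖f x‖ ≤ ε * ‖x‖ := by
    intro x hx
    have := hlip x 0 hx (by simpa using hR₀.le)
    simpa [hf0] using this
  set C₂ : ℝ := M + M * T * M * NB * κ * (1 + M) + 1 with hC₂def
  have hP2 : (0:ℝ) ≤ M * T * M * NB * κ :=
    mul_nonneg (mul_nonneg (mul_nonneg (mul_nonneg hM0 hT.le) hM0) hNB) hκ0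
  have hC₂1 : (1:ℝ) ≤ C₂ := by
    have : (0:ℝ) ≤ M * T * M * NB * κ * (1 + M) := mul_nonneg hP2 (by linarith)
    rw [hC₂def]; linarith
  have hC₂0 : (0:ℝ) < C₂ := by linarith
  set r : ℝ := R₀ / (4 * C₂) with hrdef
  have hr0 : (0:ℝ) < r := div_pos hR₀ (by linarith)
  refine ⟨r, hr0, ?_⟩
  intro y0 y1 hy0 hy1
  have hy0r : ‖y0‖ ≤ r := hy0.le
  have hy1r : ‖y1‖ ≤ r := hy1.le
  -- the fixed point space
  set X := C(Set.Icc (0:ℝ) T, Fin n → ℝ) with hXdef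
  set π : ℝ → Set.Icc (0:ℝ) T := Set.projIcc 0 T hT.le with hπdef
  set ext : X → ℝ → (Fin n → ℝ) := fun z s => z (π s) with hextdef
  have hextc : ∀ z : X, Continuous (ext z) := fun z => z.continuous.comp continuous_projIcc
  have hextb : ∀ (z : X) (s : ℝ), ‖ext z s‖ ≤ ‖z‖ := fun z s => z.norm_coe_le_norm _
  set gf : X → ℝ → (Fin n → ℝ) := fun z s => f (ext z s) with hgfdef
  have hgfc : ∀ z : X, Continuous (gf z) := fun z => (hf.continuous).comp (hextc z)
  set cz : X → (Fin n → ℝ) :=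
    fun z => y1 - expA A T y0 - ∫ s in (0:ℝ)..T, expA A (T - s) (gf z s) with hczdef
  set uz : X → ℝ → Fin m → ℝ := fun z => ucf (cz z) with huzdef
  set Gz : X → ℝ → (Fin n → ℝ) := fun z s => gf z s + matCLM B (uz z s) with hGzdef
  have hGzc : ∀ z : X, Continuous (Gz z) := fun z =>
    (hgfc z).add ((matCLM B).continuous.comp (hucfc _))
  have hIc : ∀ z : X, Continuous fun s => expA A (-s) (Gz z s) := fun z =>
    ((continuous_expA A).comp continuous_neg).clm_apply (hGzc z)
  have hIcT : ∀ z : X, Continuous fun s => expA A (T - s) (gf z s) := fun z =>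
    ((continuous_expA A).comp (continuous_const.sub continuous_id)).clm_apply (hgfc z)
  set Fz : X → ℝ → (Fin n → ℝ) :=
    fun z t => expA A t (y0 + ∫ s in (0:ℝ)..t, expA A (-s) (Gz z s)) with hFzdef
  have hFzc : ∀ z : X, Continuous (Fz z) := fun z =>
    (continuous_expA A).clm_apply (continuous_const.add
      (intervalIntegral.continuous_primitive (fun a b => (hIc z).intervalIntegrable a b) 0))
  set ΦX : X → X := fun z => ⟨fun p => Fz z p.1, (hFzc z).comp continuous_subtype_val⟩ with hΦXdef
  -- pointwise bounds
  have hgfb : ∀ z : X, ‖z‖ ≤ R₀ → ∀ s : ℝ, ‖gf z s‖ ≤ ε * R₀ := by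
    intro z hz s
    have h1 : ‖ext z s‖ ≤ R₀ := (hextb z s).trans hz
    exact (hsmall _ h1).trans (mul_le_mul_of_nonneg_left h1 hε0.le)
  have hczb : ∀ z : X, ‖z‖ ≤ R₀ → ‖cz z‖ ≤ ‖y1‖ + M * ‖y0‖ + T * M * (ε * R₀) := by
    intro z hz
    have hi : ‖∫ s in (0:ℝ)..T, expA A (T - s) (gf z s)‖ ≤ M * (ε * R₀) * |T - 0| := by
      refine intervalIntegral.norm_integral_le_of_norm_le_const fun s hs => ?_
      rw [Set.uIoc_of_le hT.le] at hs
      have hTs : T - s ∈ Set.Icc (-T) T := ⟨by linarith [hs.1, hs.2], by linarith [hs.1]⟩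
      calc ‖expA A (T - s) (gf z s)‖ ≤ ‖expA A (T - s)‖ * ‖gf z s‖ :=
            ContinuousLinearMap.le_opNorm _ _
        _ ≤ M * (ε * R₀) := mul_le_mul (hM _ hTs) (hgfb z hz s) (norm_nonneg _) hM0
    rw [sub_zero, abs_of_nonneg hT.le] at hi
    have hET : ‖expA A T y0‖ ≤ M * ‖y0‖ := by
      calc ‖expA A T y0‖ ≤ ‖expA A T‖ * ‖y0‖ := ContinuousLinearMap.le_opNorm _ _
        _ ≤ M * ‖y0‖ := mul_le_mul_of_nonneg_right
            (hM T ⟨by linarith, le_refl T⟩) (norm_nonneg _)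
    calc ‖cz z‖ ≤ ‖y1 - expA A T y0‖ + ‖∫ s in (0:ℝ)..T, expA A (T - s) (gf z s)‖ :=
          norm_sub_le _ _
      _ ≤ (‖y1‖ + ‖expA A T y0‖) + M * (ε * R₀) * T := add_le_add (norm_sub_le _ _) hi
      _ ≤ ‖y1‖ + M * ‖y0‖ + T * M * (ε * R₀) := by nlinarith [hET]
  have hGzb : ∀ z : X, ‖z‖ ≤ R₀ → ∀ s ∈ Set.Icc (0:ℝ) T,
      ‖Gz z s‖ ≤ ε * R₀ + NB * (κ * ‖cz z‖) := by
    intro z hz s hs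
    refine (norm_add_le _ _).trans (add_le_add (hgfb z hz s) ?_)
    calc ‖matCLM B (uz z s)‖ ≤ NB * ‖uz z s‖ := ContinuousLinearMap.le_opNorm _ _
      _ ≤ NB * (κ * ‖cz z‖) := mul_le_mul_of_nonneg_left (hucfb (cz z) s hs) hNB
  have hFzb : ∀ z : X, ‖z‖ ≤ R₀ → ∀ t ∈ Set.Icc (0:ℝ) T,
      ‖Fz z t‖ ≤ M * (‖y0‖ + T * (M * (ε * R₀ + NB * (κ * ‖cz z‖)))) := by
    intro z hz t ht
    have hCst : (0:ℝ) ≤ M * (ε * R₀ + NB * (κ * ‖cz z‖)) := by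
      have : (0:ℝ) ≤ NB * (κ * ‖cz z‖) := mul_nonneg hNB (mul_nonneg hκ0 (norm_nonneg _))
      have h2 : (0:ℝ) ≤ ε * R₀ := mul_nonneg hε0.le hR₀.le
      exact mul_nonneg hM0 (by linarith)
    have hi : ‖∫ s in (0:ℝ)..t, expA A (-s) (Gz z s)‖
        ≤ M * (ε * R₀ + NB * (κ * ‖cz z‖)) * |t - 0| := by
      refine intervalIntegral.norm_integral_le_of_norm_le_const fun s hs => ?_
      rw [Set.uIoc_of_le ht.1] at hs
      have hsIcc : s ∈ Set.Icc (0:ℝ) T := ⟨hs.1.le, hs.2.trans ht.2⟩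
      have hneg : -s ∈ Set.Icc (-T) T := ⟨by linarith [hsIcc.2], by linarith [hsIcc.1]⟩
      calc ‖expA A (-s) (Gz z s)‖ ≤ ‖expA A (-s)‖ * ‖Gz z s‖ :=
            ContinuousLinearMap.le_opNorm _ _
        _ ≤ M * (ε * R₀ + NB * (κ * ‖cz z‖)) :=
            mul_le_mul (hM _ hneg) (hGzb z hz s hsIcc) (norm_nonneg _) hM0
    rw [sub_zero, abs_of_nonneg ht.1] at hi
    have hi2 : ‖∫ s in (0:ℝ)..t, expA A (-s) (Gz z s)‖
        ≤ M * (ε * R₀ + NB * (κ * ‖cz z‖)) * T :=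
      hi.trans (mul_le_mul_of_nonneg_left ht.2 hCst)
    have htIcc : t ∈ Set.Icc (-T) T := ⟨by linarith [ht.1], ht.2⟩
    calc ‖Fz z t‖ ≤ ‖expA A t‖ * ‖y0 + ∫ s in (0:ℝ)..t, expA A (-s) (Gz z s)‖ :=
          ContinuousLinearMap.le_opNorm _ _
      _ ≤ M * (‖y0‖ + T * (M * (ε * R₀ + NB * (κ * ‖cz z‖)))) := by
          refine mul_le_mul (hM _ htIcc) ?_ (norm_nonneg _) hM0
          refine (norm_add_le _ _).trans ?_
          have := hi2
          nlinarith [this]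
  -- invariance of the ball of radius R₀
  have hinv : ∀ z : X, ‖z‖ ≤ R₀ → ‖ΦX z‖ ≤ R₀ := by
    intro z hz
    rw [ContinuousMap.norm_le _ hR₀.le]
    intro p
    have h1 := hFzb z hz p.1 p.2
    have h2 := hczb z hz
    have e2 : (M * T * M * NB * κ) * ‖cz z‖
        ≤ (M * T * M * NB * κ) * (‖y1‖ + M * ‖y0‖ + T * M * (ε * R₀)) :=
      mul_le_mul_of_nonneg_left h2 hP2
    have c1 : M + M * T * M * NB * κ * M ≤ C₂ := by
      have h3 : (0:ℝ) ≤ M * T * M * NB * κ := hP2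
      rw [hC₂def]; nlinarith
    have c2 : M * T * M * NB * κ ≤ C₂ := by
      have h4 : (0:ℝ) ≤ M * T * M * NB * κ * M := mul_nonneg hP2 hM0
      rw [hC₂def]; nlinarith
    have t1 : (M + M * T * M * NB * κ * M) * ‖y0‖ ≤ C₂ * r := by
      refine mul_le_mul c1 hy0r (norm_nonneg _) hC₂0.le
    have t2 : (M * T * M * NB * κ) * ‖y1‖ ≤ C₂ * r :=
      mul_le_mul c2 hy1r (norm_nonneg _) hC₂0.le
    have t3 : ε * R₀ * (M * T * M * (1 + NB * κ * T * M)) ≤ (1/2) * R₀ := by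
      have := mul_le_mul_of_nonneg_right hεQ hR₀.le
      nlinarith [this]
    have t4 : C₂ * r = R₀ / 4 := by
      rw [hrdef]
      field_simp
    have hΦval : ‖(ΦX z) p‖ = ‖Fz z p.1‖ := rfl
    rw [hΦval]
    nlinarith [h1, e2, t1, t2, t3]
  -- contraction estimate
  have hcontr : ∀ z z' : X, ‖z‖ ≤ R₀ → ‖z'‖ ≤ R₀ → ∀ p : Set.Icc (0:ℝ) T,
      ‖Fz z p.1 - Fz z' p.1‖ ≤ (1/2) * ‖z - z'‖ := by
    intro z z' hz hz' p
    set d : ℝ := ‖z - z'‖ with hddef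
    have hd0 : (0:ℝ) ≤ d := norm_nonneg _
    have hgd : ∀ s : ℝ, ‖gf z s - gf z' s‖ ≤ ε * d := by
      intro s
      have h1 : ‖ext z s - ext z' s‖ ≤ d := by
        have h2 : ext z s - ext z' s = (z - z') (π s) :=
          (ContinuousMap.sub_apply z z' (π s)).symm
        rw [h2]
        exact (z - z').norm_coe_le_norm _
      exact (hlip _ _ ((hextb z s).trans hz) ((hextb z' s).trans hz')).trans
        (mul_le_mul_of_nonneg_left h1 hε0.le)
    have hcd : ‖cz z - cz z'‖ ≤ T * (M * (ε * d)) := by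
      have heq : cz z - cz z'
          = ∫ s in (0:ℝ)..T, expA A (T - s) (gf z' s - gf z s) := by
        have h0 : cz z - cz z' = (∫ s in (0:ℝ)..T, expA A (T - s) (gf z' s))
            - ∫ s in (0:ℝ)..T, expA A (T - s) (gf z s) := by
          simp only [hczdef]
          abel
        rw [h0, ← intervalIntegral.integral_sub ((hIcT z').intervalIntegrable 0 T)
          ((hIcT z).intervalIntegrable 0 T)]
        exact intervalIntegral.integral_congr fun s _ => (map_sub _ _ _).symm
      rw [heq]
      have hi : ‖∫ s in (0:ℝ)..T, expA A (T - s) (gf z' s - gf z s)‖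
          ≤ M * (ε * d) * |T - 0| := by
        refine intervalIntegral.norm_integral_le_of_norm_le_const fun s hs => ?_
        rw [Set.uIoc_of_le hT.le] at hs
        have hTs : T - s ∈ Set.Icc (-T) T := ⟨by linarith [hs.1, hs.2], by linarith [hs.1]⟩
        calc ‖expA A (T - s) (gf z' s - gf z s)‖
            ≤ ‖expA A (T - s)‖ * ‖gf z' s - gf z s‖ := ContinuousLinearMap.le_opNorm _ _
          _ ≤ M * (ε * d) := by
              refine mul_le_mul (hM _ hTs) ?_ (norm_nonneg _) hM0
              have := hgd s
              calc ‖gf z' s - gf z s‖ = ‖gf z s - gf z' s‖ := by rw [norm_sub_rev]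
                _ ≤ ε * d := this
      rw [sub_zero, abs_of_nonneg hT.le] at hi
      calc ‖∫ s in (0:ℝ)..T, expA A (T - s) (gf z' s - gf z s)‖ ≤ M * (ε * d) * T := hi
        _ = T * (M * (ε * d)) := by ring
    have hGd : ∀ s ∈ Set.Icc (0:ℝ) T,
        ‖Gz z s - Gz z' s‖ ≤ ε * d + NB * (κ * (T * (M * (ε * d)))) := by
      intro s hs
      have heq : Gz z s - Gz z' s = (gf z s - gf z' s) + matCLM B (uz z s - uz z' s) := by
        rw [hGzdef]
        simp only [map_sub]
        abel
      rw [heq]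
      refine (norm_add_le _ _).trans (add_le_add (hgd s) ?_)
      have hu : ‖uz z s - uz z' s‖ ≤ κ * ‖cz z - cz z'‖ := by
        rw [huzdef]
        simp only []
        rw [← hucfsub]
        exact hucfb _ s hs
      calc ‖matCLM B (uz z s - uz z' s)‖ ≤ NB * ‖uz z s - uz z' s‖ :=
            ContinuousLinearMap.le_opNorm _ _
        _ ≤ NB * (κ * (T * (M * (ε * d)))) := by
            refine mul_le_mul_of_nonneg_left ?_ hNB
            exact hu.trans (mul_le_mul_of_nonneg_left hcd hκ0)
    have heqF : Fz z p.1 - Fz z' p.1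
        = expA A p.1 (∫ s in (0:ℝ)..p.1, expA A (-s) (Gz z s - Gz z' s)) := by
      rw [hFzdef]
      simp only []
      rw [← map_sub]
      congr 1
      rw [add_sub_add_left_eq_sub]
      rw [← intervalIntegral.integral_sub ((hIc z).intervalIntegrable 0 p.1)
        ((hIc z').intervalIntegrable 0 p.1)]
      refine intervalIntegral.integral_congr fun s _ => ?_
      rw [map_sub]
    have hCst : (0:ℝ) ≤ M * (ε * d + NB * (κ * (T * (M * (ε * d))))) := by
      have h5 : (0:ℝ) ≤ ε * d := mul_nonneg hε0.le hd0
      have h6 : (0:ℝ) ≤ NB * (κ * (T * (M * (ε * d)))) :=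
        mul_nonneg hNB (mul_nonneg hκ0 (mul_nonneg hT.le (mul_nonneg hM0 h5)))
      exact mul_nonneg hM0 (by linarith)
    have hi : ‖∫ s in (0:ℝ)..p.1, expA A (-s) (Gz z s - Gz z' s)‖
        ≤ M * (ε * d + NB * (κ * (T * (M * (ε * d))))) * |p.1 - 0| := by
      refine intervalIntegral.norm_integral_le_of_norm_le_const fun s hs => ?_
      rw [Set.uIoc_of_le p.2.1] at hs
      have hsIcc : s ∈ Set.Icc (0:ℝ) T := ⟨hs.1.le, hs.2.trans p.2.2⟩
      have hneg : -s ∈ Set.Icc (-T) T := ⟨by linarith [hsIcc.2], by linarith [hsIcc.1]⟩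
      calc ‖expA A (-s) (Gz z s - Gz z' s)‖ ≤ ‖expA A (-s)‖ * ‖Gz z s - Gz z' s‖ :=
            ContinuousLinearMap.le_opNorm _ _
        _ ≤ M * (ε * d + NB * (κ * (T * (M * (ε * d))))) :=
            mul_le_mul (hM _ hneg) (hGd s hsIcc) (norm_nonneg _) hM0
    rw [sub_zero, abs_of_nonneg p.2.1] at hi
    have hi2 : ‖∫ s in (0:ℝ)..p.1, expA A (-s) (Gz z s - Gz z' s)‖
        ≤ M * (ε * d + NB * (κ * (T * (M * (ε * d))))) * T :=
      hi.trans (mul_le_mul_of_nonneg_left p.2.2 hCst)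
    have htIcc : (p.1 : ℝ) ∈ Set.Icc (-T) T := ⟨by linarith [p.2.1], p.2.2⟩
    have hfinal := mul_le_mul_of_nonneg_right hεQ hd0
    calc ‖Fz z p.1 - Fz z' p.1‖
        = ‖expA A p.1 (∫ s in (0:ℝ)..p.1, expA A (-s) (Gz z s - Gz z' s))‖ := by rw [heqF]
      _ ≤ ‖expA A p.1‖ * ‖∫ s in (0:ℝ)..p.1, expA A (-s) (Gz z s - Gz z' s)‖ :=
          ContinuousLinearMap.le_opNorm _ _
      _ ≤ M * (M * (ε * d + NB * (κ * (T * (M * (ε * d))))) * T) :=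
          mul_le_mul (hM _ htIcc) hi2 (norm_nonneg _) hM0
      _ ≤ (1/2) * d := by nlinarith [hfinal]
  -- the fixed point
  have hKclosed : IsClosed (Metric.closedBall (0 : X) R₀) := Metric.isClosed_closedBall
  haveI : CompleteSpace (Metric.closedBall (0 : X) R₀) := hKclosed.completeSpace_coe
  haveI : Nonempty (Metric.closedBall (0 : X) R₀) :=
    ⟨⟨0, Metric.mem_closedBall_self hR₀.le⟩⟩
  set Φ' : Metric.closedBall (0 : X) R₀ → Metric.closedBall (0 : X) R₀ :=
    fun z => ⟨ΦX z.1, mem_closedBall_zero_iff.2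
      (hinv z.1 (mem_closedBall_zero_iff.1 z.2))⟩ with hΦ'def
  have hco : ContractingWith (1/2 : NNReal) Φ' := by
    constructor
    · rw [← NNReal.coe_lt_coe]; norm_num
    · refine LipschitzWith.of_dist_le_mul fun z z' => ?_
      have hz : ‖z.1‖ ≤ R₀ := mem_closedBall_zero_iff.1 z.2
      have hz' : ‖z'.1‖ ≤ R₀ := mem_closedBall_zero_iff.1 z'.2
      have hdd : dist (Φ' z) (Φ' z') = dist (ΦX z.1) (ΦX z'.1) := rfl
      rw [hdd, Subtype.dist_eq]
      have hhalf : ((1/2 : NNReal) : ℝ) = 1/2 := by norm_num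
      rw [hhalf]
      refine (ContinuousMap.dist_le (by positivity)).2 fun p => ?_
      have := hcontr z.1 z'.1 hz hz' p
      rw [dist_eq_norm]
      calc ‖(ΦX z.1) p - (ΦX z'.1) p‖ = ‖Fz z.1 p.1 - Fz z'.1 p.1‖ := rfl
        _ ≤ (1/2) * ‖z.1 - z'.1‖ := this
        _ = 1/2 * dist z.1 z'.1 := by rw [dist_eq_norm]
  set zfix := ContractingWith.fixedPoint Φ' hco with hzfixdef
  have hfixpt : Φ' zfix = zfix := hco.fixedPoint_isFixedPt
  set z : X := zfix.1 with hzdef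
  have hfix : ΦX z = z := congrArg Subtype.val hfixpt
  have hee : ∀ s : ℝ, ∀ hs : s ∈ Set.Icc (0:ℝ) T, ext z s = Fz z s := by
    intro s hs
    have h1 : ext z s = z ⟨s, hs⟩ := by
      rw [hextdef]
      simp only [hπdef]
      rw [Set.projIcc_of_mem]
    calc ext z s = z ⟨s, hs⟩ := h1
      _ = (ΦX z) ⟨s, hs⟩ := (DFunLike.congr_fun hfix ⟨s, hs⟩).symm
      _ = Fz z s := rfl
  -- verification
  refine ⟨uz z, Fz z, ?_, (hFzc z).continuousOn, ?_, ?_⟩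
  · -- Memℒp
    refine memLp_top_of_bound (hucfc (cz z)).aestronglyMeasurable (κ * ‖cz z‖) ?_
    refine (ae_restrict_iff' measurableSet_Ioc).2 (Filter.Eventually.of_forall fun s hs => ?_)
    exact hucfb (cz z) s ⟨hs.1.le, hs.2⟩
  · -- integral equation
    intro t ht
    have hderivF : ∀ s : ℝ, HasDerivAt (Fz z) (matCLM A (Fz z s) + Gz z s) s := by
      intro s
      have hP : HasDerivAt (fun t => y0 + ∫ σ in (0:ℝ)..t, expA A (-σ) (Gz z σ))
          (expA A (-s) (Gz z s)) s := by
        refine HasDerivAt.const_add _ ?_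
        exact intervalIntegral.integral_hasDerivAt_right ((hIc z).intervalIntegrable 0 s)
          ((hIc z).stronglyMeasurableAtFilter _ _) (hIc z).continuousAt
      have hE := hasDerivAt_expA A s
      have h2 := hE.clm_apply hP
      have hcomm : expA A s * matCLM A = matCLM A * expA A s := by
        have hc : Commute (s • matCLM A) (matCLM A) := (Commute.refl (matCLM A)).smul_left s
        exact hc.exp_left
      have heq : (expA A s * matCLM A) (y0 + ∫ σ in (0:ℝ)..s, expA A (-σ) (Gz z σ))
          + expA A s (expA A (-s) (Gz z s)) = matCLM A (Fz z s) + Gz z s := by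
        rw [hcomm, ContinuousLinearMap.mul_apply, expA_neg_cancel]
      rw [← heq]
      exact h2
    have hdercont : Continuous fun s => matCLM A (Fz z s) + Gz z s :=
      ((matCLM A).continuous.comp (hFzc z)).add (hGzc z)
    have hFTC := intervalIntegral.integral_eq_sub_of_hasDerivAt
      (fun s _ => hderivF s) (hdercont.intervalIntegrable 0 t)
    have hF0 : Fz z 0 = y0 := by
      rw [hFzdef]
      simp only [intervalIntegral.integral_same, add_zero, expA, zero_smul, exp_zero,
        ContinuousLinearMap.one_apply]
    have hcongr : (∫ s in (0:ℝ)..t, (A.mulVec (Fz z s) + f (Fz z s) + B.mulVec (uz z s)))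
        = ∫ s in (0:ℝ)..t, (matCLM A (Fz z s) + Gz z s) := by
      refine intervalIntegral.integral_congr fun s hs => ?_
      rw [Set.uIcc_of_le ht.1] at hs
      have hsT : s ∈ Set.Icc (0:ℝ) T := ⟨hs.1, hs.2.trans ht.2⟩
      have h1 : gf z s = f (Fz z s) := by rw [hgfdef]; simp only []; rw [hee s hsT]
      rw [hGzdef]
      simp only [matCLM_apply]
      rw [h1]
      abel
    rw [hcongr, hFTC, hF0]
    abel
  · -- endpoint
    have hIint : IntervalIntegrable (fun s => expA A (-s) (Gz z s)) volume 0 T :=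
      (hIc z).intervalIntegrable 0 T
    have h1 : Fz z T = expA A T y0
        + ∫ s in (0:ℝ)..T, expA A (T - s) (Gz z s) := by
      rw [hFzdef]
      simp only [map_add]
      congr 1
      rw [← ContinuousLinearMap.intervalIntegral_comp_comm _ hIint]
      refine intervalIntegral.integral_congr fun s _ => ?_
      have h2 : expA A (T - s) = expA A T * expA A (-s) := by
        rw [← expA_add, sub_eq_add_neg]
      rw [h2]
      rfl
    have hsplit : (∫ s in (0:ℝ)..T, expA A (T - s) (Gz z s))
        = (∫ s in (0:ℝ)..T, expA A (T - s) (gf z s))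
          + ∫ s in (0:ℝ)..T, expA A (T - s) (matCLM B (uz z s)) := by
      rw [← intervalIntegral.integral_add ((hIcT z).intervalIntegrable 0 T)
        ((controllable_integrand_continuous A B T (hucfc (cz z))).intervalIntegrable 0 T)]
      refine intervalIntegral.integral_congr fun s _ => ?_
      rw [hGzdef]
      simp only [map_add]
      rfl
    have hval : (∫ s in (0:ℝ)..T, expA A (T - s) (matCLM B (uz z s))) = cz z :=
      hucfval (cz z)
    rw [h1, hsplit, hval]
    simp only [hczdef]
    abel
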